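/- Let R be a normal Noetherian domain, W → Spec(R) a birational projective morphism with W normal and integral, and D an effective Cartier divisor on W. Then the ideal J = Γ(W, O_W(−D)) ⊆ R is integrally closed in R. -/

import Mathlib

open AlgebraicGeometry CategoryTheory

open Polynomial in
lemma key_span_mem {A : Type*} [CommRing A] [IsDomain A] [IsIntegrallyClosed A]
    (g : A) (hg : g ≠ 0) (n : ℕ) (hn : 0 < n) (b : A) (d : ℕ → A)
    (heq : b ^ n + ∑ i ∈ Finset.Icc 1 n, g ^ i * d i * b ^ (n - i) = 0) :
    b ∈ Ideal.span {g} := by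
  set K := FractionRing A
  set f := algebraMap A K with hf
  have hinj : Function.Injective f := IsFractionRing.injective A K
  have hgK : f g ≠ 0 := fun h => hg (hinj (by simpa using h))
  set t : K := f b / f g with ht
  have hgt : f g * t = f b := by rw [ht]; exact mul_div_cancel₀ _ hgK
  -- t satisfies a monic polynomial with coefficients d i
  have hteq : t ^ n + ∑ i ∈ Finset.Icc 1 n, f (d i) * t ^ (n - i) = 0 := by
    have hpow : (f g) ^ n * (t ^ n + ∑ i ∈ Finset.Icc 1 n, f (d i) * t ^ (n - i)) = 0 := by
      rw [mul_add, Finset.mul_sum, ← mul_pow, hgt]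
      have : ∀ i ∈ Finset.Icc 1 n,
          f g ^ n * (f (d i) * t ^ (n - i)) = f (g ^ i * d i) * f b ^ (n - i) := by
        intro i hi
        obtain ⟨hi1, hi2⟩ := Finset.mem_Icc.mp hi
        have : (f g) ^ n = (f g) ^ i * (f g) ^ (n - i) := by
          rw [← pow_add, Nat.add_sub_cancel' hi2]
        rw [this, show f g ^ i * f g ^ (n - i) * (f (d i) * t ^ (n - i))
            = f g ^ i * f (d i) * ((f g * t) ^ (n - i)) from by rw [mul_pow]; ring,
          hgt, map_mul, map_pow]
      rw [Finset.sum_congr rfl this,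
        show f b ^ n + ∑ i ∈ Finset.Icc 1 n, f (g ^ i * d i) * f b ^ (n - i)
            = f (b ^ n + ∑ i ∈ Finset.Icc 1 n, g ^ i * d i * b ^ (n - i)) from by
          simp [map_add, map_pow, map_sum, map_mul],
        heq, map_zero]
    have := mul_eq_zero.mp hpow
    rcases this with h | h
    · exact absurd (pow_eq_zero_iff hn.ne' |>.mp h) hgK
    · exact h
  -- hence t is integral over A
  have hint : IsIntegral A t := by
    refine ⟨X ^ n + ∑ i ∈ Finset.Icc 1 n, C (d i) * X ^ (n - i), ?_, ?_⟩
    · obtain ⟨m, rfl⟩ := Nat.exists_eq_add_of_lt hn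
      apply monic_X_pow_add
      apply lt_of_le_of_lt (Polynomial.degree_sum_le _ _)
      apply Finset.sup_lt_iff (by simp [Nat.lt_iff_add_one_le]) |>.mpr
      intro i hi
      obtain ⟨hi1, hi2⟩ := Finset.mem_Icc.mp hi
      refine lt_of_le_of_lt (degree_C_mul_X_pow_le _ _) ?_
      exact_mod_cast Nat.sub_lt_of_pos_le hi1 hi2
    · simp only [eval₂_add, eval₂_pow, eval₂_X, eval₂_finset_sum, eval₂_mul, eval₂_C]
      exact hteq
  obtain ⟨u, hu⟩ := IsIntegrallyClosed.isIntegral_iff.mp hint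
  have : f b = f (g * u) := by rw [map_mul, ← hgt, hu]
  rw [Ideal.mem_span_singleton]
  exact ⟨u, hinj this⟩

/-- Let `R` be a Noetherian normal domain, `π : W → Spec R` a birational
projective (hence proper) morphism with `W` a normal integral scheme, and `D` an effective
Cartier divisor on `W`, encoded by its ideal sheaf: a family `𝒟 x ⊆ O_{W,x}` of stalkwise
ideals which is locally generated by a single regular (nonzero) section. Then the ideal
`J = Γ(W, O_W(−D)) = {a ∈ R : a_x ∈ 𝒟 x for all x}` is an integrally closed ideal of `R`:
every element of `R` integral over `J` lies in `J`. -/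
theorem global_sections_of_effective_cartier_ideal_sheaf_integrally_closed
    (R : Type) [CommRing R] [IsDomain R] [IsNoetherianRing R] [IsIntegrallyClosed R]
    (W : Scheme) [IsIntegral W]
    (π : W ⟶ Spec (CommRingCat.of R)) [IsProper π]
    -- `π` is birational: it induces an isomorphism at the generic point
    (hbir : Function.Bijective (π.stalkMap (genericPoint W)))
    -- `W` is normal: all local rings are integrally closed domains
    (hnormal : ∀ x : W, IsIntegrallyClosed (W.presheaf.stalk x))
    -- the ideal sheaf `O_W(−D)` of an effective Cartier divisor `D`, given stalkwise
    (𝒟 : ∀ x : W, Ideal (W.presheaf.stalk x))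
    -- `D` is effective Cartier: locally, `𝒟` is generated by one nonzero section
    (hCartier : ∀ x : W, ∃ (U : W.Opens) (hx : x ∈ U) (s : Γ(W, U)),
      (∀ (y : W) (hy : y ∈ U),
        𝒟 y = Ideal.span {W.presheaf.germ U y hy s}) ∧
      W.presheaf.germ U x hx s ≠ 0) :
    ∀ J : Ideal R,
      (J : Set R) = {a : R |
        ∀ x : W, ((Scheme.ΓSpecIso (CommRingCat.of R)).inv ≫ π.appTop ≫
            W.presheaf.germ ⊤ x trivial) a ∈ 𝒟 x} →
      ∀ a : R,
        (∃ n : ℕ, 0 < n ∧ ∃ c : ℕ → R, (∀ i : ℕ, 1 ≤ i → i ≤ n → c i ∈ J ^ i) ∧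
          a ^ n + ∑ i ∈ Finset.Icc 1 n, c i * a ^ (n - i) = 0) →
        a ∈ J := by
  intro J hJ a ⟨n, hn, c, hc, heq⟩
  rw [← SetLike.mem_coe, hJ]
  simp only [Set.mem_setOf_eq]
  intro x
  obtain ⟨U, hx, s, hDs, hs0⟩ := hCartier x
  haveI : IsDomain (W.presheaf.stalk x) :=
    Function.Injective.isDomain (algebraMap (W.presheaf.stalk x) W.functionField)
      (IsFractionRing.injective _ _)
  haveI := hnormal x
  set g := W.presheaf.germ U x hx s with hg
  set φ := ((Scheme.ΓSpecIso (CommRingCat.of R)).inv ≫ π.appTop ≫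
      W.presheaf.germ ⊤ x trivial) with hφ
  have hφJ : ∀ r ∈ J, φ r ∈ 𝒟 x := fun r hr => (Set.ext_iff.mp hJ r).mp hr x
  have hmap : ∀ i, 1 ≤ i → i ≤ n → ∃ di, φ (c i) = g ^ i * di := by
    intro i h1 h2
    have hle : Ideal.map (φ.hom : R →+* W.presheaf.stalk x) (J ^ i) ≤ (Ideal.span {g}) ^ i := by
      rw [Ideal.map_pow]
      refine Ideal.pow_right_mono (Ideal.map_le_iff_le_comap.mpr fun r hr => ?_) i
      have := hφJ r hr
      rwa [hDs x hx] at this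
    have h1' : φ (c i) ∈ (Ideal.span {g}) ^ i :=
      hle (Ideal.mem_map_of_mem _ (hc i h1 h2))
    rw [Ideal.span_singleton_pow, Ideal.mem_span_singleton] at h1'
    exact h1'
  choose! d hd using hmap
  have heq' : φ a ^ n + ∑ i ∈ Finset.Icc 1 n, g ^ i * d i * φ a ^ (n - i) = 0 := by
    have := congrArg φ heq
    simp only [map_add, map_pow, map_sum, map_mul, map_zero] at this
    rw [← this]
    congr 1
    refine Finset.sum_congr rfl fun i hi => ?_
    obtain ⟨h1, h2⟩ := Finset.mem_Icc.mp hi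
    rw [hd i h1 h2]
  rw [hDs x hx]
  exact key_span_mem g hs0 n hn (φ a) d heq'
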